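/- arXiv:2105.04550 — 3 statements merged into one kernel-verified Lean document; each statement's English description precedes it below -/
import Mathlib

section
/- If the initialization (W_0,B_0) of an H-layer linear GNN with squared loss has singular margin γ > 0 with respect to layer H and m_H ≥ m_x, then along any gradient flow trajectory started at (W_0,B_0) one has λ_T^{(H)} ≥ γ² for all T ∈ [0,∞). -/
open Matrix
open scoped Kronecker

noncomputable section

/-- Squared Frobenius norm of a real matrix. -/
def frobSq {α β : Type*} [Fintype α] [Fintype β] (M : Matrix α β ℝ) : ℝ :=
  ∑ i, ∑ j, (M i j) ^ 2

/-- Squared Euclidean norm of a vector. -/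
def vecNormSq {α : Type*} [Fintype α] (v : α → ℝ) : ℝ := ∑ i, (v i) ^ 2

/-- Quadratic form `vᵀ M v` (Mahalanobis-type square "norm" `‖v‖_M²`). -/
def quadForm {α : Type*} [Fintype α] (M : Matrix α α ℝ) (v : α → ℝ) : ℝ :=
  v ⬝ᵥ M.mulVec v

/-- Column-stacking vectorization of a matrix: `vecM M (j, i) = M i j`. -/
def vecM {α β : Type*} (M : Matrix α β ℝ) : β × α → ℝ := fun p => M p.2 p.1

/-- Smallest (real) eigenvalue of a square matrix, as infimum of its eigenvalue set. -/
def lambdaMin {α : Type*} [Fintype α] (A : Matrix α α ℝ) : ℝ :=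
  sInf {r : ℝ | ∃ v : α → ℝ, v ≠ 0 ∧ A.mulVec v = r • v}

/-- The `min(#rows, #cols)`-th largest singular value of a matrix. -/
def sigmaMin {α β : Type*} [Fintype α] [Fintype β] (M : Matrix α β ℝ) : ℝ :=
  if Fintype.card α ≤ Fintype.card β then Real.sqrt (lambdaMin (M * Mᵀ))
  else Real.sqrt (lambdaMin (Mᵀ * M))

/-- Entrywise partial-derivative matrix (gradient) of a scalar function of a matrix. -/
def entryDeriv {a b : ℕ} (L : Matrix (Fin a) (Fin b) ℝ → ℝ)
    (M : Matrix (Fin a) (Fin b) ℝ) : Matrix (Fin a) (Fin b) ℝ :=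
  Matrix.of fun i j => deriv (fun s : ℝ => L (M + s • Matrix.single i j 1)) 0

/-- `Bseg B a b = B (b-1) * ⋯ * B a` (in the paper's 1-based notation, with
`B l` here being the paper's `B_{(l+1)} : ℝ^{m_{l+1} × m_l}`, this is `B̄^{(a+1:b)}`,
the product of the layers `a+1, …, b`); `Bseg B a a = 1` and in particular
`Bseg B 0 l` is the paper's `B̄^{(1:l)}`. -/
def Bseg {m : ℕ → ℕ} (B : ∀ l : ℕ, Matrix (Fin (m (l + 1))) (Fin (m l)) ℝ) (a : ℕ) :
    (b : ℕ) → Matrix (Fin (m b)) (Fin (m a)) ℝ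
  | 0 => if h : a = 0 then by rw [h]; exact 1 else 0
  | b + 1 => if h : a = b + 1 then by rw [h]; exact 1 else B b * Bseg B a b


/-- Training loss of the `H`-layer linear GNN with squared loss. -/
def gnnLoss {n nb my : ℕ} {m : ℕ → ℕ} (H : ℕ)
    (X : Matrix (Fin (m 0)) (Fin n) ℝ) (S : Matrix (Fin n) (Fin n) ℝ)
    (ι : Fin nb → Fin n) (Y : Matrix (Fin my) (Fin nb) ℝ)
    (W : Matrix (Fin my) (Fin (m H)) ℝ)
    (B : ∀ l : ℕ, Matrix (Fin (m (l + 1))) (Fin (m l)) ℝ) : ℝ :=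
  frobSq (W * Bseg B 0 H * X * (S ^ H).submatrix id ι - Y)

set_option maxHeartbeats 1000000
-- quadratic identity
lemma eig_quad {a b : ℕ} (M : Matrix (Fin a) (Fin b) ℝ) {r : ℝ} {v : Fin b → ℝ}
    (hv : (Mᵀ * M).mulVec v = r • v) : r * (v ⬝ᵥ v) = (M.mulVec v) ⬝ᵥ (M.mulVec v) := by
  have h1 : v ⬝ᵥ (Mᵀ * M).mulVec v = (M.mulVec v) ⬝ᵥ (M.mulVec v) := by
    rw [← Matrix.mulVec_mulVec, Matrix.dotProduct_mulVec, Matrix.vecMul_transpose]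
  rw [hv] at h1
  simpa [dotProduct_smul, smul_eq_mul] using h1

lemma dot_self_nonneg {b : ℕ} (v : Fin b → ℝ) : 0 ≤ v ⬝ᵥ v :=
  Finset.sum_nonneg fun i _ => mul_self_nonneg _

-- eigenvalues of MᵀM are nonneg
lemma eigset_subset {a b : ℕ} (M : Matrix (Fin a) (Fin b) ℝ) :
    {r : ℝ | ∃ v : Fin b → ℝ, v ≠ 0 ∧ (Mᵀ * M).mulVec v = r • v} ⊆ Set.Ici 0 := by
  rintro r ⟨v, hv0, hv⟩
  have h := eig_quad M hv
  have hvv : 0 < v ⬝ᵥ v := by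
    rcases (dot_self_nonneg v).lt_or_eq with h' | h'
    · exact h'
    · exact absurd (dotProduct_self_eq_zero.mp h'.symm) hv0
  have h2 := dot_self_nonneg (M.mulVec v)
  show 0 ≤ r
  nlinarith

lemma eigset_nonempty {b : ℕ} (hb : 0 < b) (A : Matrix (Fin b) (Fin b) ℝ) (hA : A.IsHermitian) :
    {r : ℝ | ∃ v : Fin b → ℝ, v ≠ 0 ∧ A.mulVec v = r • v}.Nonempty := by
  have i0 : Fin b := ⟨0, hb⟩
  refine ⟨hA.eigenvalues i0, (WithLp.equiv 2 _) (hA.eigenvectorBasis i0), ?_, ?_⟩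
  · intro hc
    have := (hA.eigenvectorBasis).orthonormal.ne_zero i0
    apply this
    apply (WithLp.equiv 2 _).injective
    simpa using hc
  · exact hA.mulVec_eigenvectorBasis i0

lemma transpose_eig {a b : ℕ} (hba : b = a) (M : Matrix (Fin a) (Fin b) ℝ)
    {v : Fin b → ℝ} (hv0 : v ≠ 0) (hMv : M.mulVec v = 0) :
    ∃ w : Fin a → ℝ, w ≠ 0 ∧ Mᵀ.mulVec w = 0 := by
  let e : Fin b ≃ Fin a := finCongr hba
  let M' : Matrix (Fin b) (Fin b) ℝ := M.submatrix e id
  have hdet : M'.det = 0 := by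
    rw [← Matrix.exists_mulVec_eq_zero_iff]
    refine ⟨v, hv0, ?_⟩
    funext i
    have : M.mulVec v (e i) = 0 := by rw [hMv]; rfl
    simpa [M', Matrix.mulVec, Matrix.submatrix, dotProduct] using this
  have hdetT : M'ᵀ.det = 0 := by rw [Matrix.det_transpose]; exact hdet
  obtain ⟨u, hu0, hu⟩ := (Matrix.exists_mulVec_eq_zero_iff).2 hdetT
  refine ⟨u ∘ e.symm, ?_, ?_⟩
  · intro hc
    apply hu0
    funext i
    have := congrFun hc (e i)
    simpa using this
  · funext j
    have := congrFun hu j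
    simp only [Matrix.mulVec, dotProduct, Matrix.transpose_apply, Matrix.submatrix_apply,
      id_eq, Pi.zero_apply, M'] at this ⊢
    rw [← Equiv.sum_comp e (fun i' => M i' j * (u ∘ e.symm) i')]
    simpa using this

lemma key_spec {a b : ℕ} (M : Matrix (Fin a) (Fin b) ℝ) (γ : ℝ) (hγ : 0 < γ)
    (hdim : b ≤ a) (h : γ ≤ sigmaMin M) : γ ^ 2 ≤ lambdaMin (Mᵀ * M) := by
  have hHerm2 : (Mᵀ * M).IsHermitian := by
    have := Matrix.isHermitian_conjTranspose_mul_self M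
    simpa [Matrix.conjTranspose_eq_transpose_of_trivial] using this
  rcases Nat.eq_zero_or_pos b with hb | hb
  · -- b = 0 : derive contradiction from h
    exfalso
    have hS2 : {r : ℝ | ∃ v : Fin b → ℝ, v ≠ 0 ∧ (Mᵀ * M).mulVec v = r • v} = ∅ := by
      ext r; simp only [Set.mem_setOf_eq, Set.mem_empty_iff_false, iff_false, not_exists]
      rintro v ⟨hv0, -⟩
      exact (hv0 (funext fun i => absurd i.2 (by omega)))
    rcases Nat.eq_zero_or_pos a with ha | ha
    · have hS1 : {r : ℝ | ∃ v : Fin a → ℝ, v ≠ 0 ∧ (M * Mᵀ).mulVec v = r • v} = ∅ := by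
        ext r; simp only [Set.mem_setOf_eq, Set.mem_empty_iff_false, iff_false, not_exists]
        rintro v ⟨hv0, -⟩
        exact (hv0 (funext fun i => absurd i.2 (by omega)))
      unfold sigmaMin lambdaMin at h
      rw [if_pos (by simp [ha, hb])] at h
      rw [hS1, Real.sInf_empty, Real.sqrt_zero] at h
      linarith
    · unfold sigmaMin lambdaMin at h
      rw [if_neg (by simp; omega)] at h
      rw [hS2, Real.sInf_empty, Real.sqrt_zero] at h
      linarith
  · have hS2ne := eigset_nonempty hb (Mᵀ * M) hHerm2
    have hS2sub := eigset_subset M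
    have hlam2_nonneg : 0 ≤ lambdaMin (Mᵀ * M) :=
      le_csInf hS2ne fun r hr => hS2sub hr
    by_cases hab : a ≤ b
    · -- a = b case; use M Mᵀ
      have hba : b = a := le_antisymm hab hdim |>.symm
      have hHerm1 : (M * Mᵀ).IsHermitian := by
        have := Matrix.isHermitian_mul_conjTranspose_self M
        simpa [Matrix.conjTranspose_eq_transpose_of_trivial] using this
      have hS1sub : {r : ℝ | ∃ v : Fin a → ℝ, v ≠ 0 ∧ (M * Mᵀ).mulVec v = r • v} ⊆ Set.Ici 0 := by
        have := eigset_subset Mᵀ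
        simpa using this
      have hS1ne := eigset_nonempty (hba ▸ hb) (M * Mᵀ) hHerm1
      have hlam1_nonneg : 0 ≤ lambdaMin (M * Mᵀ) := le_csInf hS1ne fun r hr => hS1sub hr
      have h1 : γ ^ 2 ≤ lambdaMin (M * Mᵀ) := by
        unfold sigmaMin at h
        rw [if_pos (by simpa using hab)] at h
        exact (Real.le_sqrt hγ.le hlam1_nonneg).1 h
      -- now lower-bound each eigenvalue of MᵀM
      refine le_csInf hS2ne ?_
      rintro r ⟨v, hv0, hv⟩
      by_cases hMv : M.mulVec v = 0
      · -- r = 0 ; find 0-eigenvector of M Mᵀ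
        exfalso
        obtain ⟨w, hw0, hw⟩ := transpose_eig hba M hv0 hMv
        have : (0:ℝ) ∈ {r : ℝ | ∃ v : Fin a → ℝ, v ≠ 0 ∧ (M * Mᵀ).mulVec v = r • v} := by
          refine ⟨w, hw0, ?_⟩
          rw [← Matrix.mulVec_mulVec, hw]
          simp
        have hle : lambdaMin (M * Mᵀ) ≤ 0 :=
          csInf_le ⟨0, fun x hx => hS1sub hx⟩ this
        nlinarith
      · have : r ∈ {r : ℝ | ∃ v : Fin a → ℝ, v ≠ 0 ∧ (M * Mᵀ).mulVec v = r • v} := by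
          refine ⟨M.mulVec v, hMv, ?_⟩
          rw [Matrix.mulVec_mulVec, Matrix.mul_assoc, ← Matrix.mulVec_mulVec, hv,
            Matrix.mulVec_smul]
        have hle : lambdaMin (M * Mᵀ) ≤ r := csInf_le ⟨0, fun x hx => hS1sub hx⟩ this
        linarith
    · unfold sigmaMin at h
      rw [if_neg (by simpa using hab)] at h
      exact (Real.le_sqrt hγ.le hlam2_nonneg).1 h


/-! ### auxiliary lemmas -/

lemma Bseg_zero_succ {m : ℕ → ℕ} (B : ∀ l : ℕ, Matrix (Fin (m (l + 1))) (Fin (m l)) ℝ)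
    (b : ℕ) : Bseg B 0 (b + 1) = B b * Bseg B 0 b := by
  simp [Bseg]

lemma Bseg_congr {m : ℕ → ℕ} {B B' : ∀ l : ℕ, Matrix (Fin (m (l + 1))) (Fin (m l)) ℝ} :
    ∀ b : ℕ, (∀ l < b, B l = B' l) → Bseg B 0 b = Bseg B' 0 b
  | 0, _ => rfl
  | (b + 1), h => by
    rw [Bseg_zero_succ, Bseg_zero_succ, h b (Nat.lt_succ_self b),
      Bseg_congr b (fun l hl => h l (hl.trans (Nat.lt_succ_self b)))]

lemma gnnLoss_congr {n nb my : ℕ} {m : ℕ → ℕ} (H : ℕ)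
    (X : Matrix (Fin (m 0)) (Fin n) ℝ) (S : Matrix (Fin n) (Fin n) ℝ)
    (ι : Fin nb → Fin n) (Y : Matrix (Fin my) (Fin nb) ℝ)
    (W : Matrix (Fin my) (Fin (m H)) ℝ)
    {B B' : ∀ l : ℕ, Matrix (Fin (m (l + 1))) (Fin (m l)) ℝ}
    (h : ∀ l < H, B l = B' l) :
    gnnLoss H X S ι Y W B = gnnLoss H X S ι Y W B' := by
  unfold gnnLoss; rw [Bseg_congr H h]

/-- Parameter space of the GNN: `W` entries and `B l` entries for `l < H`. -/
abbrev ParamSpace (my H : ℕ) (m : ℕ → ℕ) : Type :=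
  (Fin my → Fin (m H) → ℝ) × (∀ l : Fin H, Fin (m (↑l + 1)) → Fin (m ↑l) → ℝ)

/-- Extension of the truncated `B`-parameters to all of `ℕ`. -/
def extB {H : ℕ} {m : ℕ → ℕ} (b : ∀ l : Fin H, Fin (m (↑l + 1)) → Fin (m ↑l) → ℝ)
    (l : ℕ) : Matrix (Fin (m (l + 1))) (Fin (m l)) ℝ :=
  if h : l < H then Matrix.of (b ⟨l, h⟩) else 0

/-- The loss as a function on the parameter space. -/
def Gfun {n nb my H : ℕ} {m : ℕ → ℕ}
    (X : Matrix (Fin (m 0)) (Fin n) ℝ) (S : Matrix (Fin n) (Fin n) ℝ)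
    (ι : Fin nb → Fin n) (Y : Matrix (Fin my) (Fin nb) ℝ)
    (p : ParamSpace my H m) : ℝ :=
  gnnLoss H X S ι Y (Matrix.of p.1) (extB p.2)

lemma diff_entries_mul {E' : Type*} [NormedAddCommGroup E'] [NormedSpace ℝ E'] {a b c : ℕ}
    {f : E' → Matrix (Fin a) (Fin b) ℝ} {g : E' → Matrix (Fin b) (Fin c) ℝ}
    (hf : ∀ i j, Differentiable ℝ fun p => f p i j)
    (hg : ∀ i j, Differentiable ℝ fun p => g p i j) (i : Fin a) (j : Fin c) :
    Differentiable ℝ fun p => (f p * g p) i j := by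
  simp only [Matrix.mul_apply]
  exact Differentiable.fun_sum fun k _ => (hf i k).mul (hg k j)

lemma Gfun_diff {n nb my H : ℕ} {m : ℕ → ℕ}
    (X : Matrix (Fin (m 0)) (Fin n) ℝ) (S : Matrix (Fin n) (Fin n) ℝ)
    (ι : Fin nb → Fin n) (Y : Matrix (Fin my) (Fin nb) ℝ) :
    Differentiable ℝ (Gfun (H := H) X S ι Y) := by
  have hseg : ∀ b : ℕ, b ≤ H → ∀ (i : Fin (m b)) (j : Fin (m 0)),
      Differentiable ℝ fun p : ParamSpace my H m => Bseg (extB p.2) 0 b i j := by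
    intro b
    induction b with
    | zero =>
      intro _ i j
      have : ∀ B : ∀ l : ℕ, Matrix (Fin (m (l + 1))) (Fin (m l)) ℝ, Bseg B 0 0 = 1 :=
        fun _ => rfl
      simp only [this]
      exact differentiable_const _
    | succ b ih =>
      intro hb i j
      have hbH : b < H := hb
      simp only [Bseg_zero_succ]
      refine diff_entries_mul (f := fun p : ParamSpace my H m => extB p.2 b)
        (g := fun p : ParamSpace my H m => Bseg (extB p.2) 0 b)
        ?_ (fun i j => ih (Nat.le_of_lt hbH) i j) i j
      intro i j
      have heq : (fun p : ParamSpace my H m => extB p.2 b i j)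
          = fun p : ParamSpace my H m => p.2 ⟨b, hbH⟩ i j := by
        funext p
        simp only [extB, dif_pos hbH, Matrix.of_apply]
      rw [heq]
      have d1 : Differentiable ℝ (fun p : ParamSpace my H m => p.2) := differentiable_snd
      have d2 : Differentiable ℝ
          (fun q : (∀ l : Fin H, Fin (m (↑l + 1)) → Fin (m ↑l) → ℝ) => q ⟨b, hbH⟩) :=
        by fun_prop
      have d3 : Differentiable ℝ (fun q : Fin (m (b + 1)) → Fin (m b) → ℝ => q i) :=
        by fun_prop
      have d4 : Differentiable ℝ (fun q : Fin (m b) → ℝ => q j) :=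
        by fun_prop
      exact d4.comp (d3.comp (d2.comp d1))
  have hWe : ∀ (i : Fin my) (j : Fin (m H)),
      Differentiable ℝ fun p : ParamSpace my H m => (Matrix.of p.1) i j := by
    intro i j
    have d1 : Differentiable ℝ (fun p : ParamSpace my H m => p.1) := differentiable_fst
    have d3 : Differentiable ℝ (fun q : Fin my → Fin (m H) → ℝ => q i) :=
      by fun_prop
    have d4 : Differentiable ℝ (fun q : Fin (m H) → ℝ => q j) :=
      by fun_prop
    exact d4.comp (d3.comp d1)
  unfold Gfun gnnLoss frobSq
  refine Differentiable.fun_sum fun i _ => Differentiable.fun_sum fun j _ => ?_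
  refine Differentiable.pow ?_ 2
  simp only [Matrix.sub_apply]
  refine Differentiable.sub ?_ (differentiable_const _)
  exact diff_entries_mul
    (f := fun p : ParamSpace my H m => Matrix.of p.1 * Bseg (extB p.2) 0 H * X)
    (g := fun _ => (S ^ H).submatrix id ι)
    (diff_entries_mul
      (f := fun p : ParamSpace my H m => Matrix.of p.1 * Bseg (extB p.2) 0 H)
      (g := fun _ => X)
      (diff_entries_mul (f := fun p : ParamSpace my H m => Matrix.of p.1)
        (g := fun p : ParamSpace my H m => Bseg (extB p.2) 0 H) hWe (hseg H le_rfl))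
      (fun i j => differentiable_const _))
    (fun i j => differentiable_const _) i j

/-- directional derivative of a differentiable function equals `fderiv` applied to direction -/
lemma fderiv_dir {E' : Type*} [NormedAddCommGroup E'] [NormedSpace ℝ E'] {G : E' → ℝ}
    (hG : Differentiable ℝ G) (p w : E') :
    fderiv ℝ G p w = deriv (fun s : ℝ => G (p + s • w)) 0 := by
  have hc : HasDerivAt (fun s : ℝ => p + s • w) w 0 := by
    simpa using ((hasDerivAt_id (0 : ℝ)).smul_const w).const_add p
  have h0 : p + (0 : ℝ) • w = p := by simp
  have h1 : HasFDerivAt G (fderiv ℝ G p) (p + (0 : ℝ) • w) := by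
    rw [h0]; exact (hG p).hasFDerivAt
  exact (h1.comp_hasDerivAt 0 hc).deriv.symm

lemma lin_pi {ι : Type*} [Fintype ι] [DecidableEq ι] {φ : ι → Type*} [∀ i, AddCommGroup (φ i)]
    [∀ i, Module ℝ (φ i)] (L : (∀ i, φ i) →ₗ[ℝ] ℝ) (v : ∀ i, φ i) :
    L v = ∑ i, L (Pi.single i (v i)) := by
  conv_lhs => rw [← Finset.univ_sum_single v]
  rw [map_sum]

lemma lin_mat {a b : ℕ} (L : (Fin a → Fin b → ℝ) →ₗ[ℝ] ℝ) (v : Fin a → Fin b → ℝ) :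
    L v = ∑ i, ∑ j, v i j * L (Pi.single i (Pi.single j 1)) := by
  rw [lin_pi L v]
  refine Finset.sum_congr rfl fun i _ => ?_
  have h1 := lin_pi (L.comp (LinearMap.single ℝ (fun _ : Fin a => Fin b → ℝ) i)) (v i)
  simp only [LinearMap.comp_apply, LinearMap.single_apply] at h1
  rw [h1]
  refine Finset.sum_congr rfl fun j _ => ?_
  have h2 : (Pi.single j (v i j) : Fin b → ℝ) = v i j • (Pi.single j (1 : ℝ) : Fin b → ℝ) := by
    funext k
    by_cases hk : k = j <;> simp [Pi.single_apply, hk]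
  rw [h2, Pi.single_smul, _root_.map_smul, smul_eq_mul]

lemma stdBasis_eq_single {a b : ℕ} (i : Fin a) (j : Fin b) :
    Matrix.single i j (1 : ℝ) = Matrix.of (Pi.single i (Pi.single j 1)) := by
  ext i' j'
  simp [Matrix.single, Pi.single_apply]
  aesop

lemma loss_decreasing {n nb my H : ℕ} {m : ℕ → ℕ}
    (X : Matrix (Fin (m 0)) (Fin n) ℝ) (S : Matrix (Fin n) (Fin n) ℝ)
    (ι : Fin nb → Fin n) (Y : Matrix (Fin my) (Fin nb) ℝ)
    (Wt : ℝ → Matrix (Fin my) (Fin (m H)) ℝ)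
    (Bt : ℝ → ∀ l : ℕ, Matrix (Fin (m (l + 1))) (Fin (m l)) ℝ)
    (hW : ∀ t ∈ Set.Ici (0 : ℝ), ∀ i j,
      HasDerivWithinAt (fun s => Wt s i j)
        (-(entryDeriv (fun W' => gnnLoss H X S ι Y W' (Bt t)) (Wt t)) i j) (Set.Ici 0) t)
    (hB : ∀ t ∈ Set.Ici (0 : ℝ), ∀ l < H, ∀ i j,
      HasDerivWithinAt (fun s => Bt s l i j)
        (-(entryDeriv
            (fun M : Matrix (Fin (m (l + 1))) (Fin (m l)) ℝ =>
              gnnLoss H X S ι Y (Wt t) (Function.update (Bt t) l M)) (Bt t l)) i j)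
        (Set.Ici 0) t) :
    ∀ t ∈ Set.Ici (0 : ℝ),
      gnnLoss H X S ι Y (Wt t) (Bt t) ≤ gnnLoss H X S ι Y (Wt 0) (Bt 0) := by
  set G : ParamSpace my H m → ℝ := Gfun (H := H) X S ι Y with hGdef
  have hGdiff : Differentiable ℝ G := Gfun_diff X S ι Y
  set Φ : ℝ → ParamSpace my H m :=
    fun s => (fun i j => Wt s i j, fun l i j => Bt s ↑l i j) with hΦdef
  set f : ℝ → ℝ := fun s => gnnLoss H X S ι Y (Wt s) (Bt s) with hfdef
  have hext : ∀ s : ℝ, ∀ l, l < H → extB ((Φ s).2) l = Bt s l := by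
    intro s l hl
    unfold extB
    rw [dif_pos hl]
    rfl
  have hGΦ : ∀ s, G (Φ s) = f s := by
    intro s
    exact gnnLoss_congr H X S ι Y (Wt s) (hext s)
  have key : ∀ t ∈ Set.Ici (0 : ℝ), ∃ d ≤ 0, HasDerivWithinAt f d (Set.Ici 0) t := by
    intro t ht
    set gW : Matrix (Fin my) (Fin (m H)) ℝ :=
      entryDeriv (fun W' => gnnLoss H X S ι Y W' (Bt t)) (Wt t) with hgW
    set gB : ∀ l : Fin H, Matrix (Fin (m (↑l + 1))) (Fin (m ↑l)) ℝ :=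
      fun l => entryDeriv
        (fun M => gnnLoss H X S ι Y (Wt t) (Function.update (Bt t) ↑l M)) (Bt t ↑l) with hgB
    set V : ParamSpace my H m :=
      (fun i j => -(gW i j), fun l i j => -(gB l i j)) with hV
    -- the trajectory has derivative V within Ici 0
    have hΦd : HasDerivWithinAt Φ V (Set.Ici 0) t := by
      refine HasDerivWithinAt.prodMk ?_ ?_
      · exact hasDerivWithinAt_pi.2 fun i => hasDerivWithinAt_pi.2 fun j => by
          simpa using hW t ht i j
      · exact hasDerivWithinAt_pi.2 fun l => hasDerivWithinAt_pi.2 fun i =>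
          hasDerivWithinAt_pi.2 fun j => by
            simpa using hB t ht ↑l l.isLt i j
    -- identification of the directional derivatives
    have kW : ∀ (i : Fin my) (j : Fin (m H)),
        fderiv ℝ G (Φ t) ((Pi.single i (Pi.single j 1), 0) : ParamSpace my H m) = gW i j := by
      intro i j
      rw [fderiv_dir hGdiff]
      have hfun : (fun s : ℝ =>
            G (Φ t + s • ((Pi.single i (Pi.single j 1), 0) : ParamSpace my H m)))
          = fun s : ℝ =>
            gnnLoss H X S ι Y (Wt t + s • Matrix.single i j 1) (Bt t) := by
        funext s
        have h1 : Matrix.of ((Φ t + s • ((Pi.single i (Pi.single j 1), 0) :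
              ParamSpace my H m)).1) = Wt t + s • Matrix.single i j 1 := by
          rw [_root_.stdBasis_eq_single]
          rfl
        have h2 : (Φ t + s • ((Pi.single i (Pi.single j 1), 0) : ParamSpace my H m)).2
            = (Φ t).2 := by
          simp
        calc G (Φ t + s • ((Pi.single i (Pi.single j 1), 0) : ParamSpace my H m))
            = gnnLoss H X S ι Y
              (Matrix.of ((Φ t + s • ((Pi.single i (Pi.single j 1), 0) :
                ParamSpace my H m)).1))
              (extB ((Φ t + s • ((Pi.single i (Pi.single j 1), 0) :
                ParamSpace my H m)).2)) := rfl
          _ = gnnLoss H X S ι Y (Wt t + s • Matrix.single i j 1)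
              (extB ((Φ t).2)) := by rw [h1, h2]
          _ = gnnLoss H X S ι Y (Wt t + s • Matrix.single i j 1) (Bt t) :=
              gnnLoss_congr H X S ι Y _ (hext t)
      rw [hfun]
      rfl
    have kB : ∀ (l : Fin H) (i : Fin (m (↑l + 1))) (j : Fin (m ↑l)),
        fderiv ℝ G (Φ t)
          ((0, Pi.single l (Pi.single i (Pi.single j 1))) : ParamSpace my H m) = gB l i j := by
      intro l i j
      rw [fderiv_dir hGdiff]
      have hfun : (fun s : ℝ =>
            G (Φ t + s • ((0, Pi.single l (Pi.single i (Pi.single j 1))) :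
              ParamSpace my H m)))
          = fun s : ℝ => gnnLoss H X S ι Y (Wt t)
              (Function.update (Bt t) ↑l (Bt t ↑l + s • Matrix.single i j 1)) := by
        funext s
        have h1 : Matrix.of ((Φ t + s • ((0, Pi.single l (Pi.single i (Pi.single j 1))) :
              ParamSpace my H m)).1) = Wt t := by
          show Matrix.of ((Φ t).1 + s • 0) = Wt t
          rw [smul_zero, add_zero]
          rfl
        have h2 : ∀ l', l' < H →
            extB ((Φ t + s • ((0, Pi.single l (Pi.single i (Pi.single j 1))) :
              ParamSpace my H m)).2) l'
            = Function.update (Bt t) ↑l (Bt t ↑l + s • Matrix.single i j 1) l' := by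
          intro l' hl'
          unfold extB
          rw [dif_pos hl']
          by_cases hc : l' = (↑l : ℕ)
          · subst hc
            rw [Function.update_self]
            show Matrix.of ((Φ t).2 l + s • (Pi.single l (Pi.single i (Pi.single j 1)) : ∀ l'' : Fin H, Fin (m (↑l'' + 1)) → Fin (m ↑l'') → ℝ) l)
              = Bt t ↑l + s • Matrix.single i j 1
            rw [Pi.single_eq_same, _root_.stdBasis_eq_single]
            rfl
          · rw [Function.update_of_ne hc]
            have hne : (⟨l', hl'⟩ : Fin H) ≠ l := by
              intro hcc
              exact hc (by rw [← hcc])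
            show Matrix.of ((Φ t).2 ⟨l', hl'⟩
                + s • (Pi.single l (Pi.single i (Pi.single j 1)) : ∀ l'' : Fin H, Fin (m (↑l'' + 1)) → Fin (m ↑l'') → ℝ) ⟨l', hl'⟩)
              = Bt t l'
            rw [Pi.single_eq_of_ne hne, smul_zero, add_zero]
            rfl
        calc G (Φ t + s • ((0, Pi.single l (Pi.single i (Pi.single j 1))) :
              ParamSpace my H m))
            = gnnLoss H X S ι Y
              (Matrix.of ((Φ t + s • ((0, Pi.single l (Pi.single i (Pi.single j 1))) :
                ParamSpace my H m)).1))
              (extB ((Φ t + s • ((0, Pi.single l (Pi.single i (Pi.single j 1))) :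
                ParamSpace my H m)).2)) := rfl
          _ = gnnLoss H X S ι Y (Wt t)
              (Function.update (Bt t) ↑l (Bt t ↑l + s • Matrix.single i j 1)) := by
              rw [h1]
              exact gnnLoss_congr H X S ι Y _ h2
      rw [hfun]
      rfl
    -- value of the derivative
    refine ⟨fderiv ℝ G (Φ t) V, ?_, ?_⟩
    · have hsplit : V = ((V.1, 0) : ParamSpace my H m) + ((0, V.2) : ParamSpace my H m) := by
        ext <;> simp
      rw [hsplit, map_add]
      set L := fderiv ℝ G (Φ t) with hL
      have e1 : L ((V.1, 0) : ParamSpace my H m)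
          = (L.toLinearMap.comp (LinearMap.inl ℝ _ _)) V.1 := rfl
      have e2 : L ((0, V.2) : ParamSpace my H m)
          = (L.toLinearMap.comp (LinearMap.inr ℝ _ _)) V.2 := rfl
      rw [e1, e2, lin_mat, lin_pi]
      have hterm1 : ∀ (i : Fin my) (j : Fin (m H)),
          V.1 i j * (L.toLinearMap.comp (LinearMap.inl ℝ _ _)) (Pi.single i (Pi.single j 1))
          = -(gW i j * gW i j) := by
        intro i j
        have : (L.toLinearMap.comp (LinearMap.inl ℝ _ _)) (Pi.single i (Pi.single j 1))
            = gW i j := kW i j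
        rw [this]
        show (-(gW i j)) * gW i j = -(gW i j * gW i j)
        ring
      have hterm2 : ∀ l : Fin H,
          (L.toLinearMap.comp (LinearMap.inr ℝ _ _)) (Pi.single l (V.2 l))
          = ∑ i, ∑ j, -(gB l i j * gB l i j) := by
        intro l
        have h3 : (L.toLinearMap.comp (LinearMap.inr ℝ _ _)) (Pi.single l (V.2 l))
            = ((L.toLinearMap.comp (LinearMap.inr ℝ _ _)).comp
                (LinearMap.single ℝ _ l)) (V.2 l) := rfl
        rw [h3, lin_mat]
        refine Finset.sum_congr rfl fun i _ => Finset.sum_congr rfl fun j _ => ?_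
        have : ((L.toLinearMap.comp (LinearMap.inr ℝ _ _)).comp (LinearMap.single ℝ _ l))
            (Pi.single i (Pi.single j 1)) = gB l i j := kB l i j
        rw [this]
        show (-(gB l i j)) * gB l i j = -(gB l i j * gB l i j)
        ring
      calc (∑ i, ∑ j, V.1 i j *
              (L.toLinearMap.comp (LinearMap.inl ℝ _ _)) (Pi.single i (Pi.single j 1)))
            + ∑ l : Fin H, (L.toLinearMap.comp (LinearMap.inr ℝ _ _)) (Pi.single l (V.2 l))
          = (∑ i, ∑ j, -(gW i j * gW i j))
            + ∑ l : Fin H, ∑ i, ∑ j, -(gB l i j * gB l i j) := by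
            rw [Finset.sum_congr rfl fun i _ => Finset.sum_congr rfl fun j _ => hterm1 i j,
              Finset.sum_congr rfl fun l _ => hterm2 l]
        _ ≤ 0 := by
            apply add_nonpos
            · refine Finset.sum_nonpos fun i _ => Finset.sum_nonpos fun j _ => ?_
              simpa using mul_self_nonneg (gW i j)
            · refine Finset.sum_nonpos fun l _ => Finset.sum_nonpos fun i _ =>
                Finset.sum_nonpos fun j _ => ?_
              simpa using mul_self_nonneg (gB l i j)
    · have hcomp := (hGdiff (Φ t)).hasFDerivAt.comp_hasDerivWithinAt t hΦd
      have hfun : (G ∘ Φ) = f := funext hGΦ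
      rwa [hfun] at hcomp
  -- monotonicity
  have hcont : ContinuousOn f (Set.Ici 0) := by
    intro t ht
    obtain ⟨d, _, hd⟩ := key t ht
    exact hd.continuousWithinAt
  have hmono : AntitoneOn f (Set.Ici 0) := by
    refine antitoneOn_of_deriv_nonpos (convex_Ici 0) hcont ?_ ?_
    · intro t ht
      rw [interior_Ici] at ht
      obtain ⟨d, _, hd⟩ := key t (Set.mem_Ici.mpr (le_of_lt ht))
      exact (hd.hasDerivAt (Ici_mem_nhds ht)).differentiableAt.differentiableWithinAt
    · intro t ht
      rw [interior_Ici] at ht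
      obtain ⟨d, hd0, hd⟩ := key t (Set.mem_Ici.mpr (le_of_lt ht))
      rw [(hd.hasDerivAt (Ici_mem_nhds ht)).deriv]
      exact hd0
  intro t ht
  exact hmono Set.self_mem_Ici ht ht

/-- Proposition 2 of the paper: singular margin `γ > 0` at initialization
with respect to layer `H`, together with `m_H ≥ m_x`, implies `λ_T^{(H)} ≥ γ²` for all `T ≥ 0`
along any gradient flow trajectory. -/
theorem stmt1 {n nb my H : ℕ} {m : ℕ → ℕ}
    (X : Matrix (Fin (m 0)) (Fin n) ℝ) (S : Matrix (Fin n) (Fin n) ℝ)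
    (ι : Fin nb → Fin n) (hι : Function.Injective ι)
    (Y : Matrix (Fin my) (Fin nb) ℝ)
    (Wt : ℝ → Matrix (Fin my) (Fin (m H)) ℝ)
    (Bt : ℝ → ∀ l : ℕ, Matrix (Fin (m (l + 1))) (Fin (m l)) ℝ)
    (hW : ∀ t ∈ Set.Ici (0 : ℝ), ∀ i j,
      HasDerivWithinAt (fun s => Wt s i j)
        (-(entryDeriv (fun W' => gnnLoss H X S ι Y W' (Bt t)) (Wt t)) i j) (Set.Ici 0) t)
    (hB : ∀ t ∈ Set.Ici (0 : ℝ), ∀ l < H, ∀ i j,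
      HasDerivWithinAt (fun s => Bt s l i j)
        (-(entryDeriv
            (fun M : Matrix (Fin (m (l + 1))) (Fin (m l)) ℝ =>
              gnnLoss H X S ι Y (Wt t) (Function.update (Bt t) l M)) (Bt t l)) i j)
        (Set.Ici 0) t)
    -- the initialization `(W_0, B_0) = (Wt 0, Bt 0)` has singular margin `γ > 0`
    -- with respect to layer `H`
    (γ : ℝ) (hγ : 0 < γ)
    (hmargin : ∀ (W : Matrix (Fin my) (Fin (m H)) ℝ)
      (B : ∀ l : ℕ, Matrix (Fin (m (l + 1))) (Fin (m l)) ℝ),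
      gnnLoss H X S ι Y W B ≤ gnnLoss H X S ι Y (Wt 0) (Bt 0) →
      γ ≤ sigmaMin (Bseg B 0 H))
    -- `m_H ≥ m_x`
    (hdim : m 0 ≤ m H) :
    ∀ T ∈ Set.Ici (0 : ℝ),
      γ ^ 2 ≤ sInf {r : ℝ | ∃ t ∈ Set.Icc (0 : ℝ) T,
        r = lambdaMin ((Bseg (Bt t) 0 H)ᵀ * Bseg (Bt t) 0 H)} := by
  intro T hT
  have hdec := loss_decreasing X S ι Y Wt Bt hW hB
  refine le_csInf ⟨lambdaMin ((Bseg (Bt 0) 0 H)ᵀ * Bseg (Bt 0) 0 H),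
    ⟨0, ⟨le_refl 0, hT⟩, rfl⟩⟩ ?_
  rintro r ⟨t, ⟨ht0, _⟩, rfl⟩
  have hloss := hdec t ht0
  have hσ := hmargin (Wt t) (Bt t) hloss
  exact key_spec (Bseg (Bt t) 0 H) γ hγ hdim hσ

end
end

section
/- For any differentiable loss ℓ: ℝ^{m_y×n̄} → ℝ, along any gradient flow trajectory of L(W,B) = ℓ(f(X,W,B)_{*I}) for an H-layer multiscale linear GNN, for all t ≥ 0: d/dt L(W_t,B_t) = −Σ_{l=0}^H ‖vec[V_t (X(S^l)_{*I})ᵀ]‖²_{F_{(l),t}} − Σ_{i=1}^H ‖Σ_{l=i}^H J_{(i,l),t} vec[V_t (X(S^l)_{*I})ᵀ]‖₂², where V_t is the derivative of ℓ at the network output f(X,W_t,B_t)_{*I}. -/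
open Matrix
open scoped Kronecker

noncomputable section

attribute [local instance] Matrix.frobeniusNormedAddCommGroup Matrix.frobeniusNormedSpace

/-- Output (restricted to training columns) of the `H`-layer multiscale linear GNN. -/
def msOut {n nb my : ℕ} {m : ℕ → ℕ} (H : ℕ)
    (X : Matrix (Fin (m 0)) (Fin n) ℝ) (S : Matrix (Fin n) (Fin n) ℝ)
    (ι : Fin nb → Fin n)
    (W : ∀ l : ℕ, Matrix (Fin my) (Fin (m l)) ℝ)
    (B : ∀ l : ℕ, Matrix (Fin (m (l + 1))) (Fin (m l)) ℝ) : Matrix (Fin my) (Fin nb) ℝ :=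
  ∑ l ∈ Finset.range (H + 1), W l * Bseg B 0 l * X * (S ^ l).submatrix id ι

/-! ### Auxiliary lemmas for `stmt8` -/

section Aux

set_option linter.unusedSectionVars false

/-- Frobenius inner product of two matrices. -/
def dotM {α β : Type*} [Fintype α] [Fintype β] (A B : Matrix α β ℝ) : ℝ :=
  ∑ i, ∑ j, A i j * B i j

variable {α β γ δ : Type*} [Fintype α] [Fintype β] [Fintype γ] [Fintype δ]
  [DecidableEq α] [DecidableEq β] [DecidableEq γ] [DecidableEq δ]

lemma dotM_self (A : Matrix α β ℝ) : dotM A A = frobSq A := by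
  simp [dotM, frobSq, sq]

lemma dotM_comm (A B : Matrix α β ℝ) : dotM A B = dotM B A := by
  simp [dotM, mul_comm]

lemma dotM_add (V A B : Matrix α β ℝ) : dotM V (A + B) = dotM V A + dotM V B := by
  simp [dotM, Matrix.add_apply, mul_add, Finset.sum_add_distrib]

lemma dotM_neg (V A : Matrix α β ℝ) : dotM V (-A) = -dotM V A := by
  simp [dotM, Finset.sum_neg_distrib]

lemma dotM_zero (V : Matrix α β ℝ) : dotM V 0 = 0 := by
  simp [dotM]

lemma dotM_trace (A B : Matrix α β ℝ) : dotM A B = (Aᵀ * B).trace := by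
  simp only [Matrix.trace, Matrix.diag, Matrix.mul_apply, Matrix.transpose_apply, dotM]
  exact Finset.sum_comm

lemma dotM_sum {ι : Type*} (s : Finset ι) (V : Matrix α β ℝ) (A : ι → Matrix α β ℝ) :
    dotM V (∑ l ∈ s, A l) = ∑ l ∈ s, dotM V (A l) := by
  classical
  induction s using Finset.induction with
  | empty => simp [dotM_zero]
  | insert a s h ih => rw [Finset.sum_insert h, Finset.sum_insert h, dotM_add, ih]

lemma dotM_mul_left (A : Matrix α γ ℝ) (V : Matrix α β ℝ) (B : Matrix γ β ℝ) :
    dotM V (A * B) = dotM (Aᵀ * V) B := by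
  rw [dotM_trace, dotM_trace, Matrix.transpose_mul, Matrix.transpose_transpose,
    Matrix.mul_assoc]

lemma dotM_mul_right (V : Matrix α β ℝ) (A : Matrix α γ ℝ) (B : Matrix γ β ℝ) :
    dotM V (A * B) = dotM (V * Bᵀ) A := by
  rw [dotM_trace, dotM_trace, Matrix.transpose_mul, Matrix.transpose_transpose,
    Matrix.trace_mul_comm (Vᵀ) (A * B), Matrix.trace_mul_cycle B Vᵀ A, Matrix.mul_assoc]

lemma dotM_stdBasis (A : Matrix α β ℝ) (i : α) (j : β) :
    dotM A (Matrix.single i j 1) = A i j := by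
  classical
  simp [dotM, Matrix.single, Matrix.of_apply, ite_and, mul_ite, mul_one, mul_zero,
    Finset.sum_ite_eq, Finset.sum_ite_eq']

lemma dotM_stdBasis_mul (V : Matrix α β ℝ) (Q : Matrix γ β ℝ) (i : α) (j : γ) :
    dotM V (Matrix.single i j (1:ℝ) * Q) = (V * Qᵀ) i j := by
  rw [dotM_mul_right, dotM_stdBasis]

lemma dotM_mul_stdBasis_mul (V : Matrix α β ℝ) (A : Matrix α γ ℝ) (R : Matrix δ β ℝ)
    (i : γ) (j : δ) :
    dotM V (A * (Matrix.single i j (1:ℝ) * R)) = (Aᵀ * V * Rᵀ) i j := by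
  rw [dotM_mul_left, dotM_mul_right, dotM_stdBasis]

lemma vecNormSq_vecM (M : Matrix α β ℝ) : vecNormSq (vecM M) = frobSq M := by
  simp only [vecNormSq, vecM, frobSq, Fintype.sum_prod_type]
  exact Finset.sum_comm

lemma dotProduct_vecM (A B : Matrix α β ℝ) : vecM A ⬝ᵥ vecM B = dotM A B := by
  simp only [dotProduct, vecM, dotM, Fintype.sum_prod_type]
  exact Finset.sum_comm

lemma vecM_sum {ι : Type*} (s : Finset ι) (A : ι → Matrix α β ℝ) :
    vecM (∑ l ∈ s, A l) = ∑ l ∈ s, vecM (A l) := by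
  funext p
  simp [vecM, Matrix.sum_apply, Finset.sum_apply]

lemma kron_mulVec_vecM (C : Matrix γ δ ℝ) (D : Matrix α β ℝ) (M : Matrix β δ ℝ) :
    (C ⊗ₖ D).mulVec (vecM M) = vecM (D * M * Cᵀ) := by
  funext p
  obtain ⟨j, i⟩ := p
  simp only [Matrix.mulVec, dotProduct, vecM, Fintype.sum_prod_type,
    Matrix.kroneckerMap_apply, Matrix.mul_apply, Matrix.transpose_apply, Finset.sum_mul,
    Finset.mul_sum]
  refine Finset.sum_congr rfl fun b _ => Finset.sum_congr rfl fun a _ => by ring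

lemma quadForm_kron_one (Bb : Matrix γ β ℝ) (U : Matrix α β ℝ) :
    quadForm ((Bbᵀ * Bb) ⊗ₖ (1 : Matrix α α ℝ)) (vecM U) = frobSq (U * Bbᵀ) := by
  rw [quadForm, kron_mulVec_vecM, Matrix.one_mul, Matrix.transpose_mul,
    Matrix.transpose_transpose, ← Matrix.mul_assoc, dotProduct_vecM, dotM_mul_right, dotM_self]

lemma sum_triangle (N : ℕ) (F : ℕ → ℕ → ℝ) :
    ∑ l ∈ Finset.range (N + 1), ∑ k ∈ Finset.range l, F k l
      = ∑ k ∈ Finset.range N, ∑ l ∈ Finset.Icc (k + 1) N, F k l := by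
  induction N with
  | zero => simp
  | succ N ih =>
    have h1 : ∑ k ∈ Finset.range (N + 1), ∑ l ∈ Finset.Icc (k + 1) (N + 1), F k l
        = ∑ k ∈ Finset.range (N + 1), (∑ l ∈ Finset.Icc (k + 1) N, F k l + F k (N + 1)) := by
      refine Finset.sum_congr rfl fun k hk => ?_
      have hkN : k < N + 1 := Finset.mem_range.mp hk
      exact Finset.sum_Icc_succ_top (by omega) _
    rw [Finset.sum_range_succ, ih, h1, Finset.sum_add_distrib,
      Finset.sum_range_succ (fun k => ∑ l ∈ Finset.Icc (k + 1) N, F k l),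
      Finset.Icc_eq_empty (a := N + 1) (b := N) (by omega)]
    simp [add_assoc]

end Aux

section BsegAux

variable {mdim : ℕ → ℕ} (B : ∀ l : ℕ, Matrix (Fin (mdim (l + 1))) (Fin (mdim l)) ℝ)

@[simp] lemma bseg_self (a : ℕ) : Bseg B a a = 1 := by
  cases a with
  | zero => simp [Bseg]
  | succ b => simp [Bseg]

lemma bseg_succ {a b : ℕ} (h : a ≠ b + 1) : Bseg B a (b + 1) = B b * Bseg B a b := by
  simp [Bseg, h]

lemma bseg_zero_succ (b : ℕ) : Bseg B 0 (b + 1) = B b * Bseg B 0 b :=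
  bseg_succ B (by omega)

lemma bseg_splice {k l : ℕ} (h : k < l) :
    Bseg B (k + 1) l * B k * Bseg B 0 k = Bseg B 0 l := by
  induction l with
  | zero => omega
  | succ l ih =>
    rcases Nat.lt_or_ge k l with h' | h'
    · rw [bseg_succ B (by omega), bseg_zero_succ, Matrix.mul_assoc, Matrix.mul_assoc,
        ← Matrix.mul_assoc (Bseg B (k+1) l), ih h']
    · have : k = l := by omega
      subst this
      simp [bseg_zero_succ]

lemma bseg_update_le {k l : ℕ} (M : Matrix (Fin (mdim (k + 1))) (Fin (mdim k)) ℝ) (h : l ≤ k) :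
    Bseg (Function.update B k M) 0 l = Bseg B 0 l := by
  induction l with
  | zero => simp [Bseg]
  | succ l ih =>
    rw [bseg_zero_succ, bseg_zero_succ, ih (by omega), Function.update_of_ne (by omega)]

lemma bseg_update_gt {k l : ℕ} (M : Matrix (Fin (mdim (k + 1))) (Fin (mdim k)) ℝ) (h : k < l) :
    Bseg (Function.update B k M) 0 l = Bseg B (k + 1) l * M * Bseg B 0 k := by
  induction l with
  | zero => omega
  | succ l ih =>
    rcases Nat.lt_or_ge k l with h' | h'
    · rw [bseg_zero_succ, ih h', bseg_succ B (by omega), Function.update_of_ne (by omega),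
        Matrix.mul_assoc, Matrix.mul_assoc, Matrix.mul_assoc]
    · have : k = l := by omega
      subst this
      rw [bseg_zero_succ, Function.update_self, bseg_update_le B M le_rfl, bseg_self]
      simp

end BsegAux

section AnalysisAux

set_option linter.unusedSectionVars false

lemma hasDerivWithinAt_entries {p q : ℕ} {f : ℝ → Matrix (Fin p) (Fin q) ℝ}
    {f' : Matrix (Fin p) (Fin q) ℝ} {s : Set ℝ} {x : ℝ}
    (h : ∀ i j, HasDerivWithinAt (fun u => f u i j) (f' i j) s x) :
    HasDerivWithinAt f f' s x := by
  have h2 : HasDerivWithinAt (fun u => ∑ i, ∑ j, Matrix.single i j (f u i j))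
      (∑ i : Fin p, ∑ j : Fin q, Matrix.single i j (f' i j)) s x := by
    refine HasDerivWithinAt.fun_sum fun i _ => HasDerivWithinAt.fun_sum fun j _ => ?_
    simpa using (h i j).smul_const (Matrix.single i j (1:ℝ))
  have e1 : (fun u => ∑ i, ∑ j, Matrix.single i j (f u i j)) = f := by
    funext u
    exact (Matrix.matrix_eq_sum_single (f u)).symm
  rw [e1] at h2
  rwa [← Matrix.matrix_eq_sum_single] at h2

lemma hasDerivWithinAt_entry_mul {p q r : ℕ} {A : ℝ → Matrix (Fin p) (Fin q) ℝ}
    {B : ℝ → Matrix (Fin q) (Fin r) ℝ} {A' : Matrix (Fin p) (Fin q) ℝ}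
    {B' : Matrix (Fin q) (Fin r) ℝ} {s : Set ℝ} {x : ℝ}
    (hA : ∀ i j, HasDerivWithinAt (fun u => A u i j) (A' i j) s x)
    (hB : ∀ i j, HasDerivWithinAt (fun u => B u i j) (B' i j) s x) :
    ∀ i j, HasDerivWithinAt (fun u => (A u * B u) i j)
      ((A' * B x + A x * B') i j) s x := by
  intro i j
  have h2 : HasDerivWithinAt (fun u => ∑ k, A u i k * B u k j)
      (∑ k, (A' i k * B x k j + A x i k * B' k j)) s x :=
    HasDerivWithinAt.fun_sum fun k _ => (hA i k).mul (hB k j)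
  have e : (fun u => ∑ k, A u i k * B u k j) = fun u => (A u * B u) i j := by
    funext u; rw [Matrix.mul_apply]
  rw [e] at h2
  convert h2 using 1
  simp [Matrix.add_apply, Matrix.mul_apply, Finset.sum_add_distrib]

lemma hasDerivWithinAt_entry_mul_const {p q r : ℕ} {A : ℝ → Matrix (Fin p) (Fin q) ℝ}
    {A' : Matrix (Fin p) (Fin q) ℝ} {s : Set ℝ} {x : ℝ}
    (hA : ∀ i j, HasDerivWithinAt (fun u => A u i j) (A' i j) s x)
    (Cst : Matrix (Fin q) (Fin r) ℝ) :
    ∀ i j, HasDerivWithinAt (fun u => (A u * Cst) i j) ((A' * Cst) i j) s x := by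
  intro i j
  have h := hasDerivWithinAt_entry_mul (B := fun _ => Cst) (B' := 0) hA
    (fun i j => by simpa using hasDerivWithinAt_const x s (Cst i j)) i j
  simpa using h

lemma hasDerivAt_affine {a b : ℕ} {ℓ : Matrix (Fin a) (Fin b) ℝ → ℝ}
    (hl : Differentiable ℝ ℓ) (Y C : Matrix (Fin a) (Fin b) ℝ) :
    HasDerivAt (fun s : ℝ => ℓ (Y + s • C)) ((fderiv ℝ ℓ Y) C) 0 := by
  have h1 : HasDerivAt (fun s : ℝ => Y + s • C) C 0 := by
    have h0 := ((hasDerivAt_id (0:ℝ)).smul_const C).const_add Y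
    rw [one_smul] at h0
    exact h0
  have h2 := ((hl (Y + (0:ℝ) • C)).hasFDerivAt).comp_hasDerivAt 0 h1
  simp only [zero_smul, add_zero] at h2
  exact h2

lemma entryDeriv_eq_fderiv {a b : ℕ} {ℓ : Matrix (Fin a) (Fin b) ℝ → ℝ}
    (hl : Differentiable ℝ ℓ) (Y : Matrix (Fin a) (Fin b) ℝ)
    (i : Fin a) (j : Fin b) :
    entryDeriv ℓ Y i j = (fderiv ℝ ℓ Y) (Matrix.single i j 1) :=
  (hasDerivAt_affine hl Y _).deriv

lemma fderiv_eq_dotM {a b : ℕ} {ℓ : Matrix (Fin a) (Fin b) ℝ → ℝ}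
    (hl : Differentiable ℝ ℓ) (Y C : Matrix (Fin a) (Fin b) ℝ) :
    (fderiv ℝ ℓ Y) C = dotM (entryDeriv ℓ Y) C := by
  conv_lhs => rw [Matrix.matrix_eq_sum_single C]
  rw [map_sum]
  rw [show (∑ i, (fderiv ℝ ℓ Y) (∑ j, Matrix.single i j (C i j)))
      = ∑ i, ∑ j, (fderiv ℝ ℓ Y) (Matrix.single i j (C i j)) from
    Finset.sum_congr rfl fun i _ => map_sum _ _ _]
  unfold dotM
  refine Finset.sum_congr rfl fun i _ => Finset.sum_congr rfl fun j _ => ?_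
  rw [show Matrix.single i j (C i j) = (C i j) • Matrix.single i j (1:ℝ) by simp,
    _root_.map_smul, ← entryDeriv_eq_fderiv hl, smul_eq_mul, mul_comm]

lemma bseg_hasDeriv {mdim : ℕ → ℕ} {H : ℕ}
    {Bt : ℝ → ∀ l : ℕ, Matrix (Fin (mdim (l + 1))) (Fin (mdim l)) ℝ}
    {B' : ∀ l : ℕ, Matrix (Fin (mdim (l + 1))) (Fin (mdim l)) ℝ} {s : Set ℝ} {x : ℝ}
    (hB : ∀ k < H, ∀ i j, HasDerivWithinAt (fun u => Bt u k i j) (B' k i j) s x) :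
    ∀ l ≤ H, ∀ i j, HasDerivWithinAt (fun u => Bseg (Bt u) 0 l i j)
      ((∑ k ∈ Finset.range l, Bseg (Bt x) (k + 1) l * B' k * Bseg (Bt x) 0 k) i j) s x := by
  intro l
  induction l with
  | zero =>
    intro _ i j
    have e : (fun u => Bseg (Bt u) 0 0 i j) = fun _ => (1 : Matrix (Fin (mdim 0)) (Fin (mdim 0)) ℝ) i j := by
      funext u; rw [bseg_self]
    rw [e]
    simpa using hasDerivWithinAt_const x s ((1 : Matrix (Fin (mdim 0)) (Fin (mdim 0)) ℝ) i j)
  | succ l ih =>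
    intro hl i j
    have h1 : ∀ i j, HasDerivWithinAt (fun u => Bt u l i j) (B' l i j) s x :=
      hB l (by omega)
    have h2 := ih (by omega)
    have h3 := hasDerivWithinAt_entry_mul h1 h2 i j
    have e : (fun u => (Bt u l * Bseg (Bt u) 0 l) i j) = fun u => Bseg (Bt u) 0 (l + 1) i j := by
      funext u; rw [← bseg_zero_succ]
    rw [e] at h3
    convert h3 using 2
    rw [Finset.sum_range_succ, bseg_self, Matrix.one_mul]
    have e2 : ∀ k ∈ Finset.range l,
        Bseg (Bt x) (k + 1) (l + 1) * B' k * Bseg (Bt x) 0 k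
          = Bt x l * (Bseg (Bt x) (k + 1) l * B' k * Bseg (Bt x) 0 k) := fun k hk => by
      rw [bseg_succ (Bt x) (by simp at hk; omega), Matrix.mul_assoc, Matrix.mul_assoc,
        Matrix.mul_assoc]
    rw [Finset.sum_congr rfl e2, ← Matrix.mul_sum]
    exact add_comm _ _

end AnalysisAux

section MsOutAux

variable {n nb my H : ℕ} {m : ℕ → ℕ}
  (X : Matrix (Fin (m 0)) (Fin n) ℝ) (S : Matrix (Fin n) (Fin n) ℝ) (ι : Fin nb → Fin n)

lemma msOut_update_W (W : ∀ l : ℕ, Matrix (Fin my) (Fin (m l)) ℝ)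
    (B : ∀ l : ℕ, Matrix (Fin (m (l + 1))) (Fin (m l)) ℝ)
    {l : ℕ} (hl : l ≤ H) (N : Matrix (Fin my) (Fin (m l)) ℝ) :
    msOut H X S ι (Function.update W l (W l + N)) B
      = msOut H X S ι W B + N * Bseg B 0 l * X * (S ^ l).submatrix id ι := by
  unfold msOut
  have hmem : l ∈ Finset.range (H + 1) := by simp; omega
  rw [← Finset.sum_erase_add _ _ hmem, ← Finset.sum_erase_add _ _ hmem]
  have e : ∀ l' ∈ (Finset.range (H + 1)).erase l,
      Function.update W l (W l + N) l' * Bseg B 0 l' * X * (S ^ l').submatrix id ι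
        = W l' * Bseg B 0 l' * X * (S ^ l').submatrix id ι := fun l' hl' => by
    rw [Function.update_of_ne (Finset.ne_of_mem_erase hl')]
  rw [Finset.sum_congr rfl e, Function.update_self, Matrix.add_mul, Matrix.add_mul,
    Matrix.add_mul, add_assoc]

lemma msOut_update_B (W : ∀ l : ℕ, Matrix (Fin my) (Fin (m l)) ℝ)
    (B : ∀ l : ℕ, Matrix (Fin (m (l + 1))) (Fin (m l)) ℝ)
    {k : ℕ} (hk : k < H) (N : Matrix (Fin (m (k + 1))) (Fin (m k)) ℝ) :
    msOut H X S ι W (Function.update B k (B k + N))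
      = msOut H X S ι W B + ∑ l ∈ Finset.Icc (k + 1) H,
          W l * Bseg B (k + 1) l * N * Bseg B 0 k * X * (S ^ l).submatrix id ι := by
  unfold msOut
  have split : ∀ (g : ℕ → Matrix (Fin my) (Fin nb) ℝ),
      ∑ l ∈ Finset.range (H + 1), g l
        = ∑ l ∈ Finset.range (k + 1), g l + ∑ l ∈ Finset.Icc (k + 1) H, g l := by
    intro g
    rw [Finset.range_eq_Ico, Finset.range_eq_Ico, ← Finset.Ico_add_one_right_eq_Icc (k + 1) H]
    exact (Finset.sum_Ico_consecutive g (by omega : 0 ≤ k + 1) (by omega : k + 1 ≤ H + 1)).symm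
  rw [split, split]
  have elow : ∀ l ∈ Finset.range (k + 1),
      W l * Bseg (Function.update B k (B k + N)) 0 l * X * (S ^ l).submatrix id ι
        = W l * Bseg B 0 l * X * (S ^ l).submatrix id ι := fun l hl => by
    rw [bseg_update_le B _ (by simp at hl; omega)]
  have ehigh : ∀ l ∈ Finset.Icc (k + 1) H,
      W l * Bseg (Function.update B k (B k + N)) 0 l * X * (S ^ l).submatrix id ι
        = W l * Bseg B 0 l * X * (S ^ l).submatrix id ι
          + W l * Bseg B (k + 1) l * N * Bseg B 0 k * X * (S ^ l).submatrix id ι := fun l hl => by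
    have hkl : k < l := by simp at hl; omega
    have e0 : Bseg (Function.update B k (B k + N)) 0 l
        = Bseg B 0 l + Bseg B (k + 1) l * N * Bseg B 0 k := by
      rw [bseg_update_gt B _ hkl, Matrix.mul_add, Matrix.add_mul, bseg_splice B hkl]
    rw [e0, Matrix.mul_add, Matrix.add_mul, Matrix.add_mul, ← Matrix.mul_assoc,
      ← Matrix.mul_assoc]
  rw [Finset.sum_congr rfl elow, Finset.sum_congr rfl ehigh, Finset.sum_add_distrib, add_assoc]

end MsOutAux

lemma stmt8_core {n nb my H : ℕ} {m : ℕ → ℕ}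
    (X : Matrix (Fin (m 0)) (Fin n) ℝ) (S : Matrix (Fin n) (Fin n) ℝ)
    (ι : Fin nb → Fin n)
    (ℓ : Matrix (Fin my) (Fin nb) ℝ → ℝ) (hℓ : Differentiable ℝ ℓ)
    (Wt : ℝ → ∀ l : ℕ, Matrix (Fin my) (Fin (m l)) ℝ)
    (Bt : ℝ → ∀ l : ℕ, Matrix (Fin (m (l + 1))) (Fin (m l)) ℝ)
    {t : ℝ} (V : Matrix (Fin my) (Fin nb) ℝ)
    (hV : V = entryDeriv ℓ (msOut H X S ι (Wt t) (Bt t)))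
    (G : ∀ l : ℕ, Matrix (Fin my) (Fin (m l)) ℝ)
    (Dm : ∀ k : ℕ, Matrix (Fin (m (k + 1))) (Fin (m k)) ℝ)
    (hW' : ∀ l ≤ H, ∀ i j, HasDerivWithinAt (fun s => Wt s l i j) ((-(G l)) i j) (Set.Ici 0) t)
    (hB' : ∀ k < H, ∀ i j, HasDerivWithinAt (fun s => Bt s k i j) ((-(Dm k)) i j) (Set.Ici 0) t)
    (hG : ∀ l ≤ H, G l = V * (Bseg (Bt t) 0 l * (X * (S ^ l).submatrix id ι))ᵀ)
    (hD : ∀ k < H, Dm k = ∑ l ∈ Finset.Icc (k + 1) H,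
        (Bseg (Bt t) (k + 1) l)ᵀ * ((Wt t l)ᵀ * V)
          * (Bseg (Bt t) 0 k * (X * (S ^ l).submatrix id ι))ᵀ) :
    HasDerivWithinAt (fun s => ℓ (msOut H X S ι (Wt s) (Bt s)))
      (-((∑ l ∈ Finset.range (H + 1), frobSq (G l))
          + ∑ k ∈ Finset.range H, frobSq (Dm k)))
      (Set.Ici 0) t := by
  classical
  have hBseg : ∀ l ≤ H, ∀ i j, HasDerivWithinAt (fun u => Bseg (Bt u) 0 l i j)
      ((∑ k ∈ Finset.range l, Bseg (Bt t) (k + 1) l * -(Dm k) * Bseg (Bt t) 0 k) i j)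
      (Set.Ici 0) t := bseg_hasDeriv hB'
  have hterm : ∀ l ≤ H, ∀ i j, HasDerivWithinAt
      (fun u => (Wt u l * Bseg (Bt u) 0 l * X * (S ^ l).submatrix id ι) i j)
      (((-(G l) * Bseg (Bt t) 0 l
          + Wt t l * ∑ k ∈ Finset.range l, Bseg (Bt t) (k + 1) l * -(Dm k) * Bseg (Bt t) 0 k)
        * X * (S ^ l).submatrix id ι) i j)
      (Set.Ici 0) t := by
    intro l hl i j
    have h1 := hasDerivWithinAt_entry_mul (hW' l hl) (hBseg l hl)
    have h2 := hasDerivWithinAt_entry_mul_const h1 X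
    exact hasDerivWithinAt_entry_mul_const h2 ((S ^ l).submatrix id ι) i j
  have hms : HasDerivWithinAt (fun u => msOut H X S ι (Wt u) (Bt u))
      (∑ l ∈ Finset.range (H + 1),
        (-(G l) * Bseg (Bt t) 0 l
          + Wt t l * ∑ k ∈ Finset.range l, Bseg (Bt t) (k + 1) l * -(Dm k) * Bseg (Bt t) 0 k)
        * X * (S ^ l).submatrix id ι) (Set.Ici 0) t := by
    refine hasDerivWithinAt_entries fun i j => ?_
    have e : (fun u => msOut H X S ι (Wt u) (Bt u) i j)
        = fun u => ∑ l ∈ Finset.range (H + 1),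
            (Wt u l * Bseg (Bt u) 0 l * X * (S ^ l).submatrix id ι) i j := by
      funext u; simp [msOut, Matrix.sum_apply]
    rw [e, Matrix.sum_apply]
    exact HasDerivWithinAt.fun_sum fun l hl =>
      hterm l (by have := Finset.mem_range.mp hl; omega) i j
  have hcomp := (hℓ (msOut H X S ι (Wt t) (Bt t))).hasFDerivAt.comp_hasDerivWithinAt t hms
  have hder : (fderiv ℝ ℓ (msOut H X S ι (Wt t) (Bt t)))
      (∑ l ∈ Finset.range (H + 1),
        (-(G l) * Bseg (Bt t) 0 l
          + Wt t l * ∑ k ∈ Finset.range l, Bseg (Bt t) (k + 1) l * -(Dm k) * Bseg (Bt t) 0 k)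
        * X * (S ^ l).submatrix id ι)
      = -((∑ l ∈ Finset.range (H + 1), frobSq (G l))
          + ∑ k ∈ Finset.range H, frobSq (Dm k)) := by
    rw [fderiv_eq_dotM hℓ, ← hV, dotM_sum]
    have hsplit : ∀ l ∈ Finset.range (H + 1),
        dotM V ((-(G l) * Bseg (Bt t) 0 l
            + Wt t l * ∑ k ∈ Finset.range l, Bseg (Bt t) (k + 1) l * -(Dm k) * Bseg (Bt t) 0 k)
          * X * (S ^ l).submatrix id ι)
        = -frobSq (G l) + ∑ k ∈ Finset.range l,
            -dotM ((Bseg (Bt t) (k + 1) l)ᵀ * ((Wt t l)ᵀ * V)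
              * (Bseg (Bt t) 0 k * (X * (S ^ l).submatrix id ι))ᵀ) (Dm k) := by
      intro l hl
      have hlH : l ≤ H := by have := Finset.mem_range.mp hl; omega
      rw [Matrix.add_mul, Matrix.add_mul, dotM_add]
      congr 1
      · -- first piece
        simp only [Matrix.neg_mul, dotM_neg, Matrix.mul_assoc]
        rw [dotM_mul_right, ← hG l hlH, dotM_self]
      · -- second piece
        simp only [Matrix.mul_sum, Matrix.sum_mul, dotM_sum]
        refine Finset.sum_congr rfl fun k hk => ?_
        simp only [Matrix.mul_neg, Matrix.neg_mul, dotM_neg, Matrix.mul_assoc]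
        rw [dotM_mul_left, dotM_mul_left, dotM_mul_right]
        simp only [Matrix.mul_assoc]
    rw [Finset.sum_congr rfl hsplit, Finset.sum_add_distrib, sum_triangle]
    have hinner : ∀ k ∈ Finset.range H,
        (∑ l ∈ Finset.Icc (k + 1) H,
          -dotM ((Bseg (Bt t) (k + 1) l)ᵀ * ((Wt t l)ᵀ * V)
            * (Bseg (Bt t) 0 k * (X * (S ^ l).submatrix id ι))ᵀ) (Dm k))
        = -frobSq (Dm k) := by
      intro k hk
      have hkH : k < H := Finset.mem_range.mp hk
      rw [Finset.sum_neg_distrib]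
      have e : ∑ l ∈ Finset.Icc (k + 1) H,
          dotM ((Bseg (Bt t) (k + 1) l)ᵀ * ((Wt t l)ᵀ * V)
            * (Bseg (Bt t) 0 k * (X * (S ^ l).submatrix id ι))ᵀ) (Dm k) = frobSq (Dm k) := by
        rw [Finset.sum_congr rfl fun l _ => dotM_comm _ _, ← dotM_sum, ← hD k hkH, dotM_self]
      rw [e]
    rw [Finset.sum_congr rfl hinner]
    simp only [Finset.sum_neg_distrib]
    ring
  have hcomp := hcomp.congr_deriv hder
  exact hcomp

/-- Theorem 3(ii) of the paper: exact loss-reduction formula for the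
multiscale linear GNN under any differentiable loss `ℓ`:
`d/dt L = −Σ_{l=0}^H ‖vec[V_t (X(S^l)_{*I})ᵀ]‖²_{F_{(l),t}}
        − Σ_{i=1}^H ‖Σ_{l=i}^H J_{(i,l),t} vec[V_t (X(S^l)_{*I})ᵀ]‖₂²`
(the outer sum over the paper's `i ∈ {1,…,H}` is written below over `i ∈ range H`,
with paper-`i` equal to `i+1`). -/
theorem stmt8 {n nb my H : ℕ} {m : ℕ → ℕ}
    (X : Matrix (Fin (m 0)) (Fin n) ℝ) (S : Matrix (Fin n) (Fin n) ℝ)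
    (ι : Fin nb → Fin n) (hι : Function.Injective ι)
    (ℓ : Matrix (Fin my) (Fin nb) ℝ → ℝ) (hℓ : Differentiable ℝ ℓ)
    (Wt : ℝ → ∀ l : ℕ, Matrix (Fin my) (Fin (m l)) ℝ)
    (Bt : ℝ → ∀ l : ℕ, Matrix (Fin (m (l + 1))) (Fin (m l)) ℝ)
    (hW : ∀ t ∈ Set.Ici (0 : ℝ), ∀ l ≤ H, ∀ i j,
      HasDerivWithinAt (fun s => Wt s l i j)
        (-(entryDeriv
            (fun M : Matrix (Fin my) (Fin (m l)) ℝ =>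
              ℓ (msOut H X S ι (Function.update (Wt t) l M) (Bt t))) (Wt t l)) i j)
        (Set.Ici 0) t)
    (hB : ∀ t ∈ Set.Ici (0 : ℝ), ∀ l < H, ∀ i j,
      HasDerivWithinAt (fun s => Bt s l i j)
        (-(entryDeriv
            (fun M : Matrix (Fin (m (l + 1))) (Fin (m l)) ℝ =>
              ℓ (msOut H X S ι (Wt t) (Function.update (Bt t) l M))) (Bt t l)) i j)
        (Set.Ici 0) t) :
    ∀ t ∈ Set.Ici (0 : ℝ),
      ∀ V : Matrix (Fin my) (Fin nb) ℝ,
      V = entryDeriv ℓ (msOut H X S ι (Wt t) (Bt t)) →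
      HasDerivWithinAt (fun s => ℓ (msOut H X S ι (Wt s) (Bt s)))
        (-((∑ l ∈ Finset.range (H + 1),
            quadForm (((Bseg (Bt t) 0 l)ᵀ * Bseg (Bt t) 0 l) ⊗ₖ
                (1 : Matrix (Fin my) (Fin my) ℝ))
              (vecM (V * (X * (S ^ l).submatrix id ι)ᵀ)))
          + ∑ i ∈ Finset.range H,
            vecNormSq (∑ l ∈ Finset.Icc (i + 1) H,
              (Bseg (Bt t) 0 i ⊗ₖ (Wt t l * Bseg (Bt t) (i + 1) l)ᵀ).mulVec
                (vecM (V * (X * (S ^ l).submatrix id ι)ᵀ)))))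
        (Set.Ici 0) t := by
  intro t ht V hV
  classical
  have claim_G : ∀ l ≤ H,
      entryDeriv (fun M : Matrix (Fin my) (Fin (m l)) ℝ =>
          ℓ (msOut H X S ι (Function.update (Wt t) l M) (Bt t))) (Wt t l)
        = V * (Bseg (Bt t) 0 l * (X * (S ^ l).submatrix id ι))ᵀ := by
    intro l hl
    ext i j
    simp only [entryDeriv, Matrix.of_apply]
    have e : (fun s : ℝ => ℓ (msOut H X S ι
          (Function.update (Wt t) l (Wt t l + s • Matrix.single i j 1)) (Bt t)))
        = fun s : ℝ => ℓ (msOut H X S ι (Wt t) (Bt t)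
            + s • (Matrix.single i j (1:ℝ)
              * (Bseg (Bt t) 0 l * (X * (S ^ l).submatrix id ι)))) := by
      funext s
      rw [msOut_update_W X S ι (Wt t) (Bt t) hl]
      congr 1
      rw [Matrix.smul_mul, Matrix.smul_mul, Matrix.smul_mul]
      congr 1
      simp only [Matrix.mul_assoc]
    rw [e, (hasDerivAt_affine hℓ _ _).deriv, fderiv_eq_dotM hℓ, ← hV, dotM_stdBasis_mul]
  have claim_D : ∀ k < H,
      entryDeriv (fun M : Matrix (Fin (m (k + 1))) (Fin (m k)) ℝ =>
          ℓ (msOut H X S ι (Wt t) (Function.update (Bt t) k M))) (Bt t k)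
        = ∑ l ∈ Finset.Icc (k + 1) H,
            (Bseg (Bt t) (k + 1) l)ᵀ * ((Wt t l)ᵀ * V)
              * (Bseg (Bt t) 0 k * (X * (S ^ l).submatrix id ι))ᵀ := by
    intro k hk
    ext i j
    simp only [entryDeriv, Matrix.of_apply]
    have e : (fun s : ℝ => ℓ (msOut H X S ι (Wt t)
          (Function.update (Bt t) k (Bt t k + s • Matrix.single i j 1))))
        = fun s : ℝ => ℓ (msOut H X S ι (Wt t) (Bt t)
            + s • (∑ l ∈ Finset.Icc (k + 1) H,
                Wt t l * (Bseg (Bt t) (k + 1) l * (Matrix.single i j (1:ℝ)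
                  * (Bseg (Bt t) 0 k * (X * (S ^ l).submatrix id ι)))))) := by
      funext s
      rw [msOut_update_B X S ι (Wt t) (Bt t) hk]
      congr 1
      rw [Finset.smul_sum]
      congr 1
      refine Finset.sum_congr rfl fun l hl => ?_
      rw [Matrix.mul_smul, Matrix.smul_mul, Matrix.smul_mul, Matrix.smul_mul]
      congr 1
      simp only [Matrix.mul_assoc]
    rw [e, (hasDerivAt_affine hℓ _ _).deriv, fderiv_eq_dotM hℓ, ← hV, dotM_sum,
      Matrix.sum_apply]
    refine Finset.sum_congr rfl fun l hl => ?_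
    rw [dotM_mul_left, dotM_mul_left, dotM_stdBasis_mul]
  have hcore := stmt8_core X S ι ℓ hℓ Wt Bt V hV _ _
    (fun l hl => hW t ht l hl) (fun k hk => hB t ht k hk) claim_G claim_D
  have efin : -((∑ l ∈ Finset.range (H + 1),
        quadForm (((Bseg (Bt t) 0 l)ᵀ * Bseg (Bt t) 0 l) ⊗ₖ
            (1 : Matrix (Fin my) (Fin my) ℝ))
          (vecM (V * (X * (S ^ l).submatrix id ι)ᵀ)))
      + ∑ i ∈ Finset.range H,
        vecNormSq (∑ l ∈ Finset.Icc (i + 1) H,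
          (Bseg (Bt t) 0 i ⊗ₖ (Wt t l * Bseg (Bt t) (i + 1) l)ᵀ).mulVec
            (vecM (V * (X * (S ^ l).submatrix id ι)ᵀ))))
      = -((∑ l ∈ Finset.range (H + 1), frobSq
            (entryDeriv (fun M : Matrix (Fin my) (Fin (m l)) ℝ =>
              ℓ (msOut H X S ι (Function.update (Wt t) l M) (Bt t))) (Wt t l)))
          + ∑ k ∈ Finset.range H, frobSq
            (entryDeriv (fun M : Matrix (Fin (m (k + 1))) (Fin (m k)) ℝ =>
              ℓ (msOut H X S ι (Wt t) (Function.update (Bt t) k M))) (Bt t k))) := by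
    congr 1
    congr 1
    · refine Finset.sum_congr rfl fun l hl => ?_
      rw [quadForm_kron_one, claim_G l (Nat.lt_succ_iff.mp (Finset.mem_range.mp hl))]
      simp only [Matrix.transpose_mul, Matrix.mul_assoc]
    · refine Finset.sum_congr rfl fun k hk => ?_
      rw [Finset.sum_congr rfl fun l _ => kron_mulVec_vecM (Bseg (Bt t) 0 k)
          ((Wt t l * Bseg (Bt t) (k + 1) l)ᵀ) (V * (X * (S ^ l).submatrix id ι)ᵀ),
        ← vecM_sum, vecNormSq_vecM, claim_D k (Finset.mem_range.mp hk)]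
      congr 1
      refine Finset.sum_congr rfl fun l hl => ?_
      simp only [Matrix.transpose_mul, Matrix.mul_assoc]
  rw [efin]
  exact hcore


end
end

section
/- Let G ∈ ℝ^{m_x×n̄} and Y ∈ ℝ^{m_y×n̄}, and suppose m_l ≥ m_x for every l ∈ {1,…,H}. Then inf over W ∈ ℝ^{m_y×m_H} and B_{(l)} ∈ ℝ^{m_l×m_{l−1}} (l = 1,…,H, m_0 = m_x) of ‖W B_{(H)}⋯B_{(1)} G − Y‖_F² equals min over Z ∈ ℝ^{m_y×m_x} of ‖Z G − Y‖_F², which equals ‖(I − P) vec(Y)‖₂², where P is the orthogonal projection onto the column space of Gᵀ ⊗ I_{m_y}. -/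
open Matrix
open scoped Kronecker

noncomputable section

/-! ### Auxiliary lemmas -/

/-- Embedding matrix `ℝ^{m 0} → ℝ^{m l}`. -/
def Jmat (m : ℕ → ℕ) (l : ℕ) : Matrix (Fin (m l)) (Fin (m 0)) ℝ :=
  Matrix.of fun i j => if (i : ℕ) = (j : ℕ) then 1 else 0

lemma Jmat_zero (m : ℕ → ℕ) : Jmat m 0 = 1 := by
  ext i j
  simp [Jmat, Matrix.one_apply, Fin.ext_iff]

lemma JtJ (m : ℕ → ℕ) (b : ℕ) (h : m 0 ≤ m b) : (Jmat m b)ᵀ * Jmat m b = 1 := by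
  ext j j'
  simp only [Matrix.mul_apply, Matrix.transpose_apply, Jmat, Matrix.of_apply, Matrix.one_apply]
  rw [Finset.sum_eq_single (Fin.castLE h j)]
  · simp [Fin.ext_iff]
  · intro i _ hi
    have : ¬ ((i:ℕ) = (j:ℕ)) := fun hc => hi (Fin.ext (by simpa using hc))
    simp [this]
  · simp

lemma Bseg_eq_J (m : ℕ → ℕ) (H : ℕ) (hdim : ∀ l, 1 ≤ l → l ≤ H → m 0 ≤ m l) :
    ∀ b ≤ H, Bseg (m := m) (fun l => Jmat m (l + 1) * (Jmat m l)ᵀ) 0 b = Jmat m b := by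
  intro b
  induction b with
  | zero =>
    intro _
    rw [Jmat_zero]
    rfl
  | succ b ih =>
    intro hb
    have hb' : b ≤ H := Nat.le_of_succ_le hb
    have h0 : m 0 ≤ m b := by
      rcases Nat.eq_zero_or_pos b with h | h
      · subst h; exact le_rfl
      · exact hdim b h hb'
    rw [Bseg, dif_neg (by omega : ¬ (0 = b + 1)), ih hb', Matrix.mul_assoc,
      JtJ m b h0, Matrix.mul_one]

lemma frobSq_eq_vecNormSq {α β : Type*} [Fintype α] [Fintype β] (M : Matrix α β ℝ) :
    frobSq M = vecNormSq (vecM M) := by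
  rw [frobSq, vecNormSq, Fintype.sum_prod_type]
  exact Finset.sum_comm

lemma vecNormSq_eq_dot {α : Type*} [Fintype α] (v : α → ℝ) : vecNormSq v = v ⬝ᵥ v := by
  simp [vecNormSq, dotProduct, sq]

lemma vecNormSq_neg {α : Type*} [Fintype α] (v : α → ℝ) : vecNormSq (-v) = vecNormSq v := by
  simp [vecNormSq]

lemma vecM_sub {α β : Type*} (A B : Matrix α β ℝ) : vecM (A - B) = vecM A - vecM B := rfl

lemma vecM_mul {m0 nb my : ℕ} (G : Matrix (Fin m0) (Fin nb) ℝ) (Z : Matrix (Fin my) (Fin m0) ℝ) :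
    vecM (Z * G) = (Gᵀ ⊗ₖ (1 : Matrix (Fin my) (Fin my) ℝ)).mulVec (vecM Z) := by
  funext p
  obtain ⟨j, i⟩ := p
  simp only [vecM, Matrix.mul_apply, Matrix.mulVec, dotProduct, Fintype.sum_prod_type,
    Matrix.kroneckerMap_apply, Matrix.one_apply, Matrix.transpose_apply,
    mul_ite, ite_mul, mul_one, mul_zero, zero_mul, Finset.sum_ite_eq, Finset.mem_univ, if_true]
  exact Finset.sum_congr rfl fun k _ => mul_comm _ _

lemma vecNormSq_sub_ge {α : Type*} [Fintype α] (q v : α → ℝ) (h : q ⬝ᵥ v = 0) :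
    vecNormSq v ≤ vecNormSq (q - v) := by
  have hq : (0:ℝ) ≤ q ⬝ᵥ q := Finset.sum_nonneg fun i _ => mul_self_nonneg _
  have hvq : v ⬝ᵥ q = 0 := by rw [dotProduct_comm]; exact h
  rw [vecNormSq_eq_dot, vecNormSq_eq_dot, sub_dotProduct, dotProduct_sub, dotProduct_sub,
    h, hvq]
  linarith

/-- identification of the global minimum value of the deep linear model.
When all hidden widths satisfy `m_l ≥ m_x`, the infimum over `(W,B)` of
`‖W B_{(H)}⋯B_{(1)} G − Y‖_F²` equals the minimum over `Z` of `‖Z G − Y‖_F²`, which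
equals `‖(I − P) vec(Y)‖₂²` for `P` the orthogonal projection onto the column space of
`Gᵀ ⊗ I_{m_y}`. -/
theorem stmt13 {nb my H : ℕ} {m : ℕ → ℕ}
    (G : Matrix (Fin (m 0)) (Fin nb) ℝ)
    (Y : Matrix (Fin my) (Fin nb) ℝ)
    (hdim : ∀ l, 1 ≤ l → l ≤ H → m 0 ≤ m l)
    (P : Matrix (Fin nb × Fin my) (Fin nb × Fin my) ℝ)
    -- `P` is the orthogonal projection onto the column space of `K = Gᵀ ⊗ I_{m_y}`:
    (hPsymm : Pᵀ = P)
    (hPidem : P * P = P)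
    (hPrange : ∀ v : Fin nb × Fin my → ℝ, ∃ w : Fin (m 0) × Fin my → ℝ,
      P.mulVec v = (Gᵀ ⊗ₖ (1 : Matrix (Fin my) (Fin my) ℝ)).mulVec w)
    (hPfix : ∀ w : Fin (m 0) × Fin my → ℝ,
      P.mulVec ((Gᵀ ⊗ₖ (1 : Matrix (Fin my) (Fin my) ℝ)).mulVec w) =
        (Gᵀ ⊗ₖ (1 : Matrix (Fin my) (Fin my) ℝ)).mulVec w) :
    -- the deep and shallow problems have the same optimal value, ...
    sInf {r : ℝ | ∃ (W : Matrix (Fin my) (Fin (m H)) ℝ)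
        (B : ∀ l : ℕ, Matrix (Fin (m (l + 1))) (Fin (m l)) ℝ),
        frobSq (W * Bseg B 0 H * G - Y) = r} =
      sInf {r : ℝ | ∃ Z : Matrix (Fin my) (Fin (m 0)) ℝ, frobSq (Z * G - Y) = r} ∧
    -- ... and the shallow minimum is attained, with value `‖(I − P) vec(Y)‖₂²`
    IsLeast {r : ℝ | ∃ Z : Matrix (Fin my) (Fin (m 0)) ℝ, frobSq (Z * G - Y) = r}
      (vecNormSq ((1 - P).mulVec (vecM Y))) := by
  set K : Matrix (Fin nb × Fin my) (Fin (m 0) × Fin my) ℝ :=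
    Gᵀ ⊗ₖ (1 : Matrix (Fin my) (Fin my) ℝ) with hK
  have hH0 : m 0 ≤ m H := by
    rcases Nat.eq_zero_or_pos H with h | h
    · subst h; exact le_rfl
    · exact hdim H h le_rfl
  -- the two feasible-value sets coincide
  have hset : {r : ℝ | ∃ (W : Matrix (Fin my) (Fin (m H)) ℝ)
        (B : ∀ l : ℕ, Matrix (Fin (m (l + 1))) (Fin (m l)) ℝ),
        frobSq (W * Bseg B 0 H * G - Y) = r} =
      {r : ℝ | ∃ Z : Matrix (Fin my) (Fin (m 0)) ℝ, frobSq (Z * G - Y) = r} := by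
    ext r
    constructor
    · rintro ⟨W, B, rfl⟩
      exact ⟨W * Bseg B 0 H, rfl⟩
    · rintro ⟨Z, rfl⟩
      refine ⟨Z * (Jmat m H)ᵀ, fun l => Jmat m (l + 1) * (Jmat m l)ᵀ, ?_⟩
      rw [Bseg_eq_J m H hdim H le_rfl, Matrix.mul_assoc Z, JtJ m H hH0, Matrix.mul_one]
  -- general value formula
  have hval : ∀ Z : Matrix (Fin my) (Fin (m 0)) ℝ,
      frobSq (Z * G - Y) = vecNormSq (K.mulVec (vecM Z) - vecM Y) := by
    intro Z
    rw [frobSq_eq_vecNormSq, vecM_sub, vecM_mul]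
  -- orthogonality: anything fixed by P is ⊥ to (1-P) y
  have horth : ∀ q : Fin nb × Fin my → ℝ, P.mulVec q = q →
      q ⬝ᵥ (1 - P).mulVec (vecM Y) = 0 := by
    intro q hq
    have h1 : P * (1 - P) = 0 := by rw [Matrix.mul_sub, Matrix.mul_one, hPidem, sub_self]
    calc q ⬝ᵥ (1 - P).mulVec (vecM Y)
        = (P.mulVec q) ⬝ᵥ (1 - P).mulVec (vecM Y) := by rw [hq]
      _ = (q ᵥ* Pᵀ) ⬝ᵥ (1 - P).mulVec (vecM Y) := by rw [Matrix.vecMul_transpose]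
      _ = q ⬝ᵥ Pᵀ.mulVec ((1 - P).mulVec (vecM Y)) := by simp only [Matrix.dotProduct_mulVec]
      _ = 0 := by
          rw [hPsymm, Matrix.mulVec_mulVec, h1, Matrix.zero_mulVec, dotProduct_zero]
    -- membership
  have hmem : vecNormSq ((1 - P).mulVec (vecM Y)) ∈
      {r : ℝ | ∃ Z : Matrix (Fin my) (Fin (m 0)) ℝ, frobSq (Z * G - Y) = r} := by
    obtain ⟨w, hw⟩ := hPrange (vecM Y)
    refine ⟨Matrix.of fun i k => w (k, i), ?_⟩
    have hz : vecM (Matrix.of fun i k => w (k, i) : Matrix (Fin my) (Fin (m 0)) ℝ) = w := rfl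
    rw [hval, hz, ← hw]
    have : P.mulVec (vecM Y) - vecM Y = -((1 - P).mulVec (vecM Y)) := by
      rw [Matrix.sub_mulVec, Matrix.one_mulVec, neg_sub]
    rw [this, vecNormSq_neg]
  refine ⟨by rw [hset], hmem, ?_⟩
  rintro r ⟨Z, rfl⟩
  rw [hval]
  set y := vecM Y
  set q : Fin nb × Fin my → ℝ := K.mulVec (vecM Z) - P.mulVec y with hqdef
  have hq : P.mulVec q = q := by
    rw [hqdef, Matrix.mulVec_sub, hPfix, Matrix.mulVec_mulVec, hPidem]
  have hrw : K.mulVec (vecM Z) - y = q - (1 - P).mulVec y := by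
    rw [hqdef, Matrix.sub_mulVec, Matrix.one_mulVec, sub_sub_sub_cancel_right]
  rw [hrw]
  exact vecNormSq_sub_ge q _ (horth q hq)

end
end
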